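/- Let {f_t : t ∈ T} be an increasing family of epi-pointed functions on ℝⁿ with pointwise supremum f, such that f* is proper and f** = sup_{t∈T} f_t**. Then for every y ∈ int(dom f*): f*(y) = inf_{t∈T} f_t*(y). -/

import Mathlib

open scoped RealInnerProductSpace Pointwise
open Set Filter

noncomputable section

/-- `En n` is the Euclidean space `ℝⁿ`. -/
abbrev En (n : ℕ) := EuclideanSpace ℝ (Fin n)

/-- The epigraph of an extended-real-valued function. -/
def epiS {n : ℕ} (g : En n → EReal) : Set (En n × ℝ) := {p | g p.1 ≤ (p.2 : EReal)}

/-- The Fenchel conjugate `g*`. -/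
def conjF {n : ℕ} (g : En n → EReal) (y : En n) : EReal :=
  ⨆ x, (⟪y, x⟫ : EReal) - g x

/-- The effective domain of `g`. -/
def dm {n : ℕ} (g : En n → EReal) : Set (En n) := {x | g x < ⊤}

/-- `g` is proper: never `-∞` and not identically `+∞`. -/
def ProperF {n : ℕ} (g : En n → EReal) : Prop := (∃ x, g x < ⊤) ∧ ∀ x, ⊥ < g x

/-- The ε-subdifferential `∂_ε g(x)` (empty when `g x` is not finite). -/
def eSub {n : ℕ} (g : En n → EReal) (ε : ℝ) (x : En n) : Set (En n) :=
  {y | ∃ r : ℝ, g x = (r : EReal) ∧ ∀ z, ((⟪y, z - x⟫ + r - ε : ℝ) : EReal) ≤ g z}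

/-- The indicator function `δ_A` (0 on `A`, `+∞` outside). -/
def indE {n : ℕ} (A : Set (En n)) (x : En n) : EReal :=
  Set.indicator Aᶜ (fun _ => (⊤ : EReal)) x

/-- The ε-normal set `N^ε_A(x) = ∂_ε δ_A(x)`. -/
def eNormal {n : ℕ} (A : Set (En n)) (ε : ℝ) (x : En n) : Set (En n) :=
  eSub (indE A) ε x

/-- `Γ₀`: proper, lower semicontinuous, convex. -/
def Gamma0 {n : ℕ} (g : En n → EReal) : Prop :=
  ProperF g ∧ LowerSemicontinuous g ∧ Convex ℝ (epiS g)

/-- Epi-pointed: `g*` is proper with nonempty interior of its domain. -/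
def EpiPointed {n : ℕ} (g : En n → EReal) : Prop :=
  ProperF (conjF g) ∧ (interior (dm (conjF g))).Nonempty

/-- The closed convex hull `c̄o g`: the function whose epigraph is the closed
convex hull of `epi g`. -/
def cchF {n : ℕ} (g : En n → EReal) (x : En n) : EReal :=
  sInf ((fun r : ℝ => (r : EReal)) '' {r | (x, r) ∈ closure (convexHull ℝ (epiS g))})

/-- The convex hull `co g`: the function whose epigraph is the convex hull of `epi g`. -/
def coF {n : ℕ} (g : En n → EReal) (x : En n) : EReal :=
  sInf ((fun r : ℝ => (r : EReal)) '' {r | (x, r) ∈ convexHull ℝ (epiS g)})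

/-- Membership in the generalized simplex `Δ(T)`. -/
def inSimplex {T : Type*} (l : T →₀ ℝ) : Prop :=
  (∀ t, 0 ≤ l t ∧ l t ≤ 1) ∧ (∑ t ∈ l.support, l t) = 1

/-- Membership in `Δ^ε(T)`. -/
def inDelta {T : Type*} (ε : ℝ) (e : T →₀ ℝ) : Prop :=
  (∀ t, 0 ≤ e t ∧ e t ≤ ε) ∧ (∑ t ∈ e.support, e t) = ε

end

section Aux

variable {n : ℕ}

lemma exists_real_of_ne {a : EReal} (hb : a ≠ ⊥) (ht : a ≠ ⊤) :
    ∃ r : ℝ, a = (r : EReal) := by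
  induction a using EReal.rec with
  | bot => exact absurd rfl hb
  | coe r => exact ⟨r, rfl⟩
  | top => exact absurd rfl ht

lemma exists_real_ge {a : EReal} (ht : a ≠ ⊤) : ∃ r : ℝ, a ≤ (r : EReal) := by
  induction a using EReal.rec with
  | bot => exact ⟨0, bot_le⟩
  | coe r => exact ⟨r, le_rfl⟩
  | top => exact absurd rfl ht

/-- For reals `β, a` and `b : EReal`, `β ≤ a - b ↔ b ≤ a - β`. -/
lemma coe_le_sub_iff (β a : ℝ) (b : EReal) :
    (β : EReal) ≤ (a : EReal) - b ↔ b ≤ ((a - β : ℝ) : EReal) := by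
  induction b using EReal.rec with
  | bot => simp [EReal.coe_sub_bot]
  | coe r =>
    rw [← EReal.coe_sub, EReal.coe_le_coe_iff, EReal.coe_le_coe_iff]
    constructor <;> intro h <;> linarith
  | top => simp [EReal.sub_top, ← EReal.coe_sub]

/-- For reals `A, C` and `b : EReal`, `A - b ≤ C ↔ A - C ≤ b`. -/
lemma sub_le_coe_iff (A C : ℝ) (b : EReal) :
    (A : EReal) - b ≤ (C : EReal) ↔ ((A - C : ℝ) : EReal) ≤ b := by
  induction b using EReal.rec with
  | bot => simp [EReal.coe_sub_bot, ← EReal.coe_sub]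
  | coe r =>
    rw [← EReal.coe_sub, EReal.coe_le_coe_iff, EReal.coe_le_coe_iff]
    constructor <;> intro h <;> linarith
  | top => simp [EReal.sub_top]

lemma fenchel_young {g : En n → EReal} (y x : En n) :
    (⟪y, x⟫ : EReal) - g x ≤ conjF g y :=
  le_iSup (fun x => (⟪y, x⟫ : EReal) - g x) x

lemma conj_anti {g₁ g₂ : En n → EReal} (h : ∀ x, g₁ x ≤ g₂ x) (y : En n) :
    conjF g₂ y ≤ conjF g₁ y :=
  iSup_mono fun x => EReal.sub_le_sub le_rfl (h x)

lemma biconj_le (g : En n → EReal) (x : En n) : conjF (conjF g) x ≤ g x := by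
  refine iSup_le fun y => ?_
  have h1 : (⟪y, x⟫ : EReal) - g x ≤ conjF g y := fenchel_young y x
  by_cases htop : g x = ⊤
  · rw [htop]; exact le_top
  by_cases hbot : g x = ⊥
  · rw [hbot, EReal.coe_sub_bot, top_le_iff] at h1
    rw [h1, EReal.sub_top]
    exact bot_le
  obtain ⟨r, hr⟩ := exists_real_of_ne hbot htop
  rw [hr, ← EReal.coe_sub] at h1
  rw [hr, sub_le_coe_iff]
  refine le_trans ?_ h1
  rw [EReal.coe_le_coe_iff, real_inner_comm]

lemma triple_conj (g : En n → EReal) (y : En n) :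
    conjF (conjF (conjF g)) y = conjF g y :=
  le_antisymm (biconj_le (conjF g) y)
    (conj_anti (fun x => biconj_le g x) y)

lemma conj_ne_bot {g : En n → EReal} {x₀ : En n} (h : g x₀ ≠ ⊤) (y : En n) :
    ⊥ < conjF g y := by
  refine lt_of_lt_of_le ?_ (fenchel_young y x₀)
  by_cases hbot : g x₀ = ⊥
  · rw [hbot, EReal.coe_sub_bot]; exact bot_lt_top
  obtain ⟨r, hr⟩ := exists_real_of_ne hbot h
  rw [hr, ← EReal.coe_sub]
  exact EReal.bot_lt_coe _

end Aux

section Aux2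

variable {n : ℕ}

lemma convex_dm_conj (g : En n → EReal) : Convex ℝ (dm (conjF g)) := by
  intro z₁ h₁ z₂ h₂ a b ha hb hab
  obtain ⟨r₁, hr₁⟩ := exists_real_ge (h₁ : conjF g z₁ < ⊤).ne
  obtain ⟨r₂, hr₂⟩ := exists_real_ge (h₂ : conjF g z₂ < ⊤).ne
  have : conjF g (a • z₁ + b • z₂) ≤ ((a * r₁ + b * r₂ : ℝ) : EReal) := by
    refine iSup_le fun x => ?_
    by_cases htop : g x = ⊤
    · rw [htop, EReal.sub_top]; exact bot_le
    by_cases hbot : g x = ⊥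
    · exfalso
      have : (⟪z₁, x⟫ : EReal) - g x ≤ conjF g z₁ := fenchel_young z₁ x
      rw [hbot, EReal.coe_sub_bot, top_le_iff] at this
      have h₁' : conjF g z₁ < ⊤ := h₁
      rw [this] at h₁'
      exact lt_irrefl _ h₁'
    obtain ⟨s, hs⟩ := exists_real_of_ne hbot htop
    have k₁ : ⟪z₁, x⟫ - s ≤ r₁ := by
      have := (fenchel_young z₁ x).trans hr₁
      rw [hs, ← EReal.coe_sub, EReal.coe_le_coe_iff] at this
      exact this
    have k₂ : ⟪z₂, x⟫ - s ≤ r₂ := by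
      have := (fenchel_young z₂ x).trans hr₂
      rw [hs, ← EReal.coe_sub, EReal.coe_le_coe_iff] at this
      exact this
    rw [hs, ← EReal.coe_sub, EReal.coe_le_coe_iff]
    have hinner : ⟪a • z₁ + b • z₂, x⟫ = a * ⟪z₁, x⟫ + b * ⟪z₂, x⟫ := by
      rw [inner_add_left, real_inner_smul_left, real_inner_smul_left]
    rw [hinner]
    have e₁ := mul_le_mul_of_nonneg_left k₁ ha
    have e₂ := mul_le_mul_of_nonneg_left k₂ hb
    rw [mul_sub] at e₁ e₂
    have es : a * s + b * s = s := by rw [← add_mul, hab, one_mul]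
    linarith
  exact lt_of_le_of_lt this (EReal.coe_lt_top _)

lemma isClosed_S (φ : En n → EReal) (y : En n) (β : ℝ) :
    IsClosed {x : En n | (β : EReal) ≤ (⟪y, x⟫ : EReal) - conjF φ x} := by
  have hset : {x : En n | (β : EReal) ≤ (⟪y, x⟫ : EReal) - conjF φ x} =
      ⋂ z, {x : En n | ((⟪x, z⟫ - (⟪y, x⟫ - β) : ℝ) : EReal) ≤ φ z} := by
    ext x
    simp only [mem_setOf_eq, mem_iInter]
    rw [coe_le_sub_iff]
    constructor
    · intro h z
      rw [← sub_le_coe_iff]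
      exact (fenchel_young x z).trans h
    · intro h
      refine iSup_le fun z => ?_
      rw [sub_le_coe_iff]
      exact h z
  rw [hset]
  refine isClosed_iInter fun z => ?_
  have hcont : Continuous fun x : En n => ⟪x, z⟫ - (⟪y, x⟫ - β) :=
    (continuous_id.inner continuous_const).sub
      ((continuous_const.inner continuous_id).sub continuous_const)
  by_cases htop : φ z = ⊤
  · simp [htop]
  by_cases hbot : φ z = ⊥
  · have : {x : En n | ((⟪x, z⟫ - (⟪y, x⟫ - β) : ℝ) : EReal) ≤ φ z} = ∅ := by
      rw [hbot]; ext x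
      simp only [mem_setOf_eq, le_bot_iff, mem_empty_iff_false, iff_false]
      exact EReal.coe_ne_bot _
    rw [this]; exact isClosed_empty
  obtain ⟨m, hm⟩ := exists_real_of_ne hbot htop
  have : {x : En n | ((⟪x, z⟫ - (⟪y, x⟫ - β) : ℝ) : EReal) ≤ φ z} =
      {x : En n | ⟪x, z⟫ - (⟪y, x⟫ - β) ≤ m} := by
    ext x; rw [mem_setOf_eq, mem_setOf_eq, hm, EReal.coe_le_coe_iff]
  rw [this]
  exact isClosed_le hcont continuous_const

end Aux2

section Sep

variable {n : ℕ}

lemma conj_top_of_notin_closure (G : En n → EReal) (U : Set (En n))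
    (hUconv : Convex ℝ U) (x₀ : En n) (A : ℝ)
    (hkey : ∀ (d : En n) (c : ℝ), (∀ u ∈ U, ⟪d, u⟫ < c) → ∀ s : ℝ, 0 ≤ s →
      conjF (conjF G) (x₀ + s • d) ≤ ((A + s * c : ℝ) : EReal))
    (v : En n) (hv : v ∉ closure U) :
    conjF (conjF (conjF G)) v = ⊤ := by
  obtain ⟨L, c, hLc, hcv⟩ :=
    geometric_hahn_banach_closed_point hUconv.closure isClosed_closure hv
  set d := (InnerProductSpace.toDual ℝ (En n)).symm L with hddef
  have hdw : ∀ w, ⟪d, w⟫ = L w := fun w => InnerProductSpace.toDual_symm_apply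
  have hUc : ∀ u ∈ U, ⟪d, u⟫ < c := fun u hu => (hdw u) ▸ hLc u (subset_closure hu)
  have hpos : 0 < ⟪d, v⟫ - c := by
    have h := hcv; rw [← hdw v] at h; linarith
  rw [EReal.eq_top_iff_forall_lt]
  intro M
  set s : ℝ := max 0 ((M + A - ⟪v, x₀⟫ + 1) / (⟪d, v⟫ - c)) with hsdef
  have hs0 : 0 ≤ s := le_max_left _ _
  have hsbig : M + A - ⟪v, x₀⟫ + 1 ≤ s * (⟪d, v⟫ - c) := by
    have h2 : (M + A - ⟪v, x₀⟫ + 1) / (⟪d, v⟫ - c) ≤ s := le_max_right _ _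
    calc M + A - ⟪v, x₀⟫ + 1
        = ((M + A - ⟪v, x₀⟫ + 1) / (⟪d, v⟫ - c)) * (⟪d, v⟫ - c) :=
          (div_mul_cancel₀ _ hpos.ne').symm
      _ ≤ s * (⟪d, v⟫ - c) := mul_le_mul_of_nonneg_right h2 hpos.le
  have hterm : (⟪v, x₀ + s • d⟫ : EReal) - conjF (conjF G) (x₀ + s • d) ≤
      conjF (conjF (conjF G)) v := fenchel_young v _
  have hub := hkey d c hUc s hs0
  have hinner : ⟪v, x₀ + s • d⟫ = ⟪v, x₀⟫ + s * ⟪d, v⟫ := by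
    rw [inner_add_right, real_inner_smul_right, real_inner_comm v d]
  have hlow : ((⟪v, x₀⟫ + s * ⟪d, v⟫ - (A + s * c) : ℝ) : EReal) ≤
      (⟪v, x₀ + s • d⟫ : EReal) - conjF (conjF G) (x₀ + s • d) := by
    rw [hinner, EReal.coe_sub]
    exact EReal.sub_le_sub le_rfl hub
  have hM : (M : EReal) < ((⟪v, x₀⟫ + s * ⟪d, v⟫ - (A + s * c) : ℝ) : EReal) := by
    rw [EReal.coe_lt_coe_iff]
    nlinarith [hsbig]
  exact lt_of_lt_of_le hM (hlow.trans hterm)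

end Sep



/-- For an increasing family of epi-pointed functions over a directed
set, with `f*` proper and `f** = sup_t f_t**`, one has `f*(y) = inf_t f_t*(y)` for
every `y ∈ int (dom f*)`. -/
theorem statement10 {n : ℕ} {T : Type*} [Preorder T]
    (hdir : ∀ a b : T, ∃ c, a ≤ c ∧ b ≤ c)
    (f : T → En n → EReal)
    (hmono : ∀ ⦃s t : T⦄, s ≤ t → ∀ x, f s x ≤ f t x)
    (hep : ∀ t, EpiPointed (f t))
    (hp : ProperF (conjF (fun x => ⨆ t, f t x)))
    (hbi : ∀ x, conjF (conjF (fun x => ⨆ t, f t x)) x = ⨆ t, conjF (conjF (f t)) x)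
    (y : En n) (hy : y ∈ interior (dm (conjF (fun x => ⨆ t, f t x)))) :
    conjF (fun x => ⨆ t, f t x) y = ⨅ t, conjF (f t) y := by
  classical
  haveI : IsDirected T (· ≤ ·) := ⟨hdir⟩
  set F : En n → EReal := fun x => ⨆ t, f t x with hFdef
  haveI hTne : Nonempty T := by
    by_contra hT
    rw [not_nonempty_iff] at hT
    obtain ⟨x₁, hx₁⟩ := hp.1
    have hFbot : F x₁ = ⊥ := by rw [hFdef]; exact iSup_of_empty _
    have htop : (⊤ : EReal) ≤ conjF F x₁ := by
      refine le_trans ?_ (fenchel_young x₁ x₁)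
      rw [hFbot, EReal.coe_sub_bot]
    exact absurd hx₁ (not_lt.2 htop)
  have hφ_ne_bot : ∀ t z, conjF (f t) z ≠ ⊥ := fun t z => ((hep t).1.2 z).ne'
  have hφ_dom : ∀ t, ∃ z, conjF (f t) z < ⊤ := fun t => (hep t).1.1
  have hg_bot : ∀ t x, ⊥ < conjF (conjF (f t)) x := by
    intro t x
    obtain ⟨z, hz⟩ := hφ_dom t
    exact conj_ne_bot hz.ne x
  have hφ_anti : ∀ ⦃s t : T⦄, s ≤ t → ∀ z, conjF (f t) z ≤ conjF (f s) z :=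
    fun s t h z => conj_anti (hmono h) z
  have hg_mono : ∀ ⦃s t : T⦄, s ≤ t → ∀ x, conjF (conjF (f s)) x ≤ conjF (conjF (f t)) x :=
    fun s t h x => conj_anti (hφ_anti h) x
  have hle : conjF F y ≤ ⨅ t, conjF (f t) y :=
    le_iInf fun t => conj_anti (fun x => le_iSup (fun t => f t x) t) y
  refine le_antisymm hle ?_
  by_contra hcon
  rw [not_le] at hcon
  obtain ⟨β, hβ1, hβ2⟩ := EReal.lt_iff_exists_real_btwn.1 hcon
  have hβt : ∀ t, (β : EReal) < conjF (f t) y := fun t => lt_of_lt_of_le hβ2 (iInf_le _ t)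
  set U : Set (En n) := ⋃ t, dm (conjF (f t)) with hUdef
  have hCmono : ∀ ⦃s t : T⦄, s ≤ t → dm (conjF (f s)) ⊆ dm (conjF (f t)) :=
    fun s t h z hz => lt_of_le_of_lt (hφ_anti h z) hz
  have hUconv : Convex ℝ U := by
    intro z₁ h₁ z₂ h₂ a b ha hb hab
    obtain ⟨t₁, ht₁⟩ := mem_iUnion.1 h₁
    obtain ⟨t₂, ht₂⟩ := mem_iUnion.1 h₂
    obtain ⟨t₃, h₁₃, h₂₃⟩ := hdir t₁ t₂
    exact mem_iUnion.2 ⟨t₃, convex_dm_conj (f t₃) (hCmono h₁₃ ht₁) (hCmono h₂₃ ht₂) ha hb hab⟩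
  have hx₀' : ∃ x, F x ≠ ⊤ := by
    by_contra hFt
    push_neg at hFt
    have hbot : conjF F y = ⊥ := by
      refine le_bot_iff.1 (iSup_le fun x => ?_)
      rw [hFt x, EReal.sub_top]
    exact (hp.2 y).ne' hbot
  obtain ⟨x₀, hx₀⟩ := hx₀'
  have hbc1 : conjF (conjF F) x₀ ≠ ⊤ := by
    intro h
    have hb := biconj_le F x₀
    rw [h] at hb
    exact hx₀ (top_le_iff.1 hb)
  have hbc2 : conjF (conjF F) x₀ ≠ ⊥ := by
    obtain ⟨y₂, hy₂⟩ := hp.1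
    exact (conj_ne_bot hy₂.ne x₀).ne'
  obtain ⟨A, hA⟩ := exists_real_of_ne hbc2 hbc1
  have hkey : ∀ (d : En n) (c : ℝ), (∀ u ∈ U, ⟪d, u⟫ < c) → ∀ s : ℝ, 0 ≤ s →
      conjF (conjF F) (x₀ + s • d) ≤ ((A + s * c : ℝ) : EReal) := by
    intro d c hUc s hs
    rw [hbi]
    refine iSup_le fun t => ?_
    refine iSup_le fun u => ?_
    by_cases hu : conjF (f t) u = ⊤
    · rw [hu, EReal.sub_top]; exact bot_le
    obtain ⟨m, hm⟩ := exists_real_of_ne (hφ_ne_bot t u) hu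
    have huU : u ∈ U := mem_iUnion.2 ⟨t, lt_top_iff_ne_top.2 hu⟩
    have hdu : ⟪d, u⟫ < c := hUc u huU
    have h2 : ⟪x₀, u⟫ - m ≤ A := by
      have hfy : (⟪x₀, u⟫ : EReal) - conjF (f t) u ≤ conjF (conjF (f t)) x₀ :=
        fenchel_young x₀ u
      have hle2 : conjF (conjF (f t)) x₀ ≤ conjF (conjF F) x₀ := by
        rw [hbi x₀]; exact le_iSup (fun t => conjF (conjF (f t)) x₀) t
      have h3 := hfy.trans hle2
      rw [hm, hA, ← EReal.coe_sub, EReal.coe_le_coe_iff] at h3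
      exact h3
    have hinner : ⟪x₀ + s • d, u⟫ = ⟪x₀, u⟫ + s * ⟪d, u⟫ := by
      rw [inner_add_left, real_inner_smul_left]
    rw [hm, ← EReal.coe_sub, EReal.coe_le_coe_iff, hinner]
    nlinarith [mul_le_mul_of_nonneg_left hdu.le hs]
  have hdmcl : dm (conjF F) ⊆ closure U := by
    intro v hv
    by_contra hvU
    have htop := conj_top_of_notin_closure F U hUconv x₀ A hkey v hvU
    rw [triple_conj F v] at htop
    have hv' : conjF F v < ⊤ := hv
    exact hv'.ne htop
  have hyclU : y ∈ interior (closure U) := interior_mono hdmcl hy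
  have hUclconv : Convex ℝ (closure U) := hUconv.closure
  have hUint : (interior U).Nonempty := by
    by_contra hne
    rw [not_nonempty_iff_eq_empty] at hne
    have hsp : ¬ affineSpan ℝ U = ⊤ := by
      intro htop2
      have h4 := hUconv.interior_nonempty_iff_affineSpan_eq_top.2 htop2
      rw [hne] at h4
      exact Set.not_nonempty_empty h4
    have hclsub : closure U ⊆ (affineSpan ℝ U : Set (En n)) :=
      closure_minimal (subset_affineSpan ℝ U) (affineSpan ℝ U).closed_of_finiteDimensional
    have h2 : affineSpan ℝ (closure U) = ⊤ :=
      hUclconv.interior_nonempty_iff_affineSpan_eq_top.1 ⟨y, hyclU⟩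
    have h3 : affineSpan ℝ (closure U) ≤ affineSpan ℝ U := affineSpan_le.2 hclsub
    rw [h2] at h3
    exact hsp (top_le_iff.1 h3)
  obtain ⟨u₁, hu₁⟩ := hUint
  obtain ⟨ε, hε, hball⟩ := Metric.isOpen_iff.1 isOpen_interior y hyclU
  have hyU : y ∈ interior U := by
    set θ : ℝ := ε / (2 * ‖y - u₁‖ + 1) with hθdef
    have hden : 0 < 2 * ‖y - u₁‖ + 1 := by positivity
    have hθ : 0 < θ := div_pos hε hden
    have hz : y + θ • (y - u₁) ∈ closure U := by
      apply interior_subset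
      apply hball
      rw [Metric.mem_ball, dist_eq_norm]
      have hc : y + θ • (y - u₁) - y = θ • (y - u₁) := add_sub_cancel_left y _
      rw [hc, norm_smul, Real.norm_eq_abs, abs_of_pos hθ]
      have : θ * ‖y - u₁‖ = ε * ‖y - u₁‖ / (2 * ‖y - u₁‖ + 1) := by
        rw [hθdef]; ring
      rw [this, div_lt_iff₀ hden]
      nlinarith [norm_nonneg (y - u₁), hε]
    have h1θ : (0:ℝ) < 1 + θ := by positivity
    have hab : θ/(1+θ) + 1/(1+θ) = 1 := by
      rw [← add_div, add_comm θ 1, div_self h1θ.ne']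
    have hcombo : (θ/(1+θ)) • u₁ + (1/(1+θ)) • (y + θ • (y - u₁)) = y := by
      match_scalars <;> (field_simp; try ring)
    rw [← hcombo]
    exact hUconv.combo_interior_closure_mem_interior hu₁ hz
      (div_pos hθ h1θ) (by positivity) hab
  obtain ⟨ε₂, hε₂, hball₂⟩ := Metric.isOpen_iff.1 isOpen_interior y hyU
  set δ : ℝ := ε₂ / 2 with hδdef
  have hδ : 0 < δ := half_pos hε₂
  set e : Fin n → En n := fun i => EuclideanSpace.single i (1:ℝ) with hedef
  set p : Fin n × Bool → En n := fun q => y + (if q.2 then δ else -δ) • e q.1 with hpdef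
  have hpU : ∀ q, p q ∈ U := by
    intro q
    apply interior_subset
    apply hball₂
    rw [Metric.mem_ball, dist_eq_norm]
    have hc : p q - y = (if q.2 then δ else -δ) • e q.1 := by
      rw [hpdef]; exact add_sub_cancel_left y _
    rw [hc, norm_smul, Real.norm_eq_abs]
    have he1 : ‖e q.1‖ = 1 := by
      rw [hedef]; simpa using EuclideanSpace.norm_single q.1 (1:ℝ)
    rw [he1, mul_one]
    have : |if q.2 then δ else -δ| = δ := by
      split_ifs
      · exact abs_of_pos hδ
      · rw [abs_neg]; exact abs_of_pos hδ
    rw [this, hδdef]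
    linarith
  choose τ hτ using fun q => mem_iUnion.1 (hpU q)
  obtain ⟨t₁, ht₁⟩ := (Finset.image τ Finset.univ).exists_le
  have hpt₁ : ∀ q, p q ∈ dm (conjF (f t₁)) := fun q =>
    hCmono (ht₁ (τ q) (Finset.mem_image_of_mem τ (Finset.mem_univ q))) (hτ q)
  choose M hM using fun q => exists_real_ge ((hpt₁ q) : conjF (f t₁) (p q) < ⊤).ne
  set S : T → Set (En n) :=
    fun t => {x | (β : EReal) ≤ (⟪y, x⟫ : EReal) - conjF (conjF (f t)) x} with hSdef
  have hSclosed : ∀ t, IsClosed (S t) := fun t => isClosed_S (conjF (f t)) y β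
  have hSanti : ∀ ⦃s t : T⦄, s ≤ t → S t ⊆ S s := by
    intro s t h x hx
    exact le_trans hx (EReal.sub_le_sub le_rfl (hg_mono h x))
  have hSne : ∀ t, (S t).Nonempty := by
    intro t
    have h1 : (β : EReal) < conjF (conjF (conjF (f t))) y := by
      rw [triple_conj]; exact hβt t
    have h1' : (β : EReal) < ⨆ x, (⟪y, x⟫ : EReal) - conjF (conjF (f t)) x := h1
    obtain ⟨x, hx⟩ := lt_iSup_iff.1 h1'
    exact ⟨x, hx.le⟩
  set B : Fin n → ℝ := fun i => (max (M (i, true)) (M (i, false)) - β) / δ with hBdef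
  set R : ℝ := Real.sqrt (∑ i, B i ^ 2) with hRdef
  have hSsub : S t₁ ⊆ Metric.closedBall 0 R := by
    intro x hx
    have hx' : (β : EReal) ≤ (⟪y, x⟫ : EReal) - conjF (conjF (f t₁)) x := hx
    have hgt : conjF (conjF (f t₁)) x ≠ ⊤ := by
      intro h
      rw [h, EReal.sub_top, le_bot_iff] at hx'
      exact EReal.coe_ne_bot β hx'
    obtain ⟨s, hs⟩ := exists_real_of_ne (hg_bot t₁ x).ne' hgt
    have hsβ : s ≤ ⟪y, x⟫ - β := by
      have h5 := (coe_le_sub_iff β _ _).1 hx'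
      rw [hs, EReal.coe_le_coe_iff] at h5
      exact h5
    have hq : ∀ q : Fin n × Bool, ⟪p q, x⟫ - s ≤ M q := by
      intro q
      have hfy : (⟪p q, x⟫ : EReal) - conjF (conjF (f t₁)) x ≤
          conjF (conjF (conjF (f t₁))) (p q) := fenchel_young (p q) x
      rw [triple_conj] at hfy
      have h6 := hfy.trans (hM q)
      rw [hs, ← EReal.coe_sub, EReal.coe_le_coe_iff] at h6
      exact h6
    have hip : ∀ (i : Fin n) (c : ℝ), ⟪y + c • e i, x⟫ = ⟪y, x⟫ + c * (x i) := by
      intro i c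
      rw [inner_add_left, real_inner_smul_left]
      have hsingle : ⟪e i, x⟫ = x i := by
        rw [hedef]
        rw [EuclideanSpace.inner_single_left]
        simp
      rw [hsingle]
    have hcoord : ∀ i, |x i| ≤ B i := by
      intro i
      have h1 := hq (i, true)
      have h2 := hq (i, false)
      have hp1 : p (i, true) = y + δ • e i := by rw [hpdef]; simp
      have hp2 : p (i, false) = y + (-δ) • e i := by rw [hpdef]; simp
      rw [hp1, hip i δ] at h1
      rw [hp2, hip i (-δ)] at h2
      have hBδ : B i * δ = max (M (i, true)) (M (i, false)) - β := by
        rw [hBdef]; exact div_mul_cancel₀ _ hδ.ne'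
      rw [abs_le]
      constructor
      · have hmr := le_max_right (M (i, true)) (M (i, false))
        have h7 : (-(x i)) * δ ≤ B i * δ := by rw [hBδ]; nlinarith
        have := le_of_mul_le_mul_right h7 hδ
        linarith
      · have hml := le_max_left (M (i, true)) (M (i, false))
        have h7 : (x i) * δ ≤ B i * δ := by rw [hBδ]; nlinarith
        exact le_of_mul_le_mul_right h7 hδ
    rw [Metric.mem_closedBall, dist_zero_right, EuclideanSpace.norm_eq, hRdef]
    apply Real.sqrt_le_sqrt
    apply Finset.sum_le_sum
    intro i _
    rw [Real.norm_eq_abs]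
    exact pow_le_pow_left₀ (abs_nonneg _) (hcoord i) 2
  have hcomp₁ : IsCompact (S t₁) :=
    (isCompact_closedBall (0 : En n) R).of_isClosed_subset (hSclosed t₁) hSsub
  set Z : T → Set (En n) := fun t => S t ∩ S t₁ with hZdef
  have hZne : ∀ t, (Z t).Nonempty := by
    intro t
    obtain ⟨t₂, h₁, h₂⟩ := hdir t t₁
    exact (hSne t₂).mono (subset_inter (hSanti h₁) (hSanti h₂))
  have hZclosed : ∀ t, IsClosed (Z t) := fun t => (hSclosed t).inter (hSclosed t₁)
  have hZcomp : ∀ t, IsCompact (Z t) := fun t =>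
    hcomp₁.of_isClosed_subset (hZclosed t) inter_subset_right
  have hZdir : Directed (· ⊇ ·) Z := by
    intro t t'
    obtain ⟨t₂, h₁, h₂⟩ := hdir t t'
    exact ⟨t₂, fun x hx => ⟨hSanti h₁ hx.1, hx.2⟩, fun x hx => ⟨hSanti h₂ hx.1, hx.2⟩⟩
  obtain ⟨xinf, hxinf⟩ :=
    IsCompact.nonempty_iInter_of_directed_nonempty_isCompact_isClosed Z hZdir hZne hZcomp hZclosed
  have hxS : ∀ t, xinf ∈ S t := fun t => (mem_iInter.1 hxinf t).1
  have hsup : conjF (conjF F) xinf ≤ ((⟪y, xinf⟫ - β : ℝ) : EReal) := by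
    rw [hbi]
    refine iSup_le fun t => ?_
    exact (coe_le_sub_iff β _ _).1 (hxS t)
  have hfin : (β : EReal) ≤ conjF F y := by
    have h1 : (β : EReal) ≤ (⟪y, xinf⟫ : EReal) - conjF (conjF F) xinf :=
      (coe_le_sub_iff β _ _).2 hsup
    have h2 : (⟪y, xinf⟫ : EReal) - conjF (conjF F) xinf ≤ conjF (conjF (conjF F)) y :=
      fenchel_young y xinf
    rw [triple_conj] at h2
    exact h1.trans h2
  exact absurd hβ1 (not_lt.2 hfin)
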